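/- Cost-table form of the encoded couplings: consider N registers with register i consisting of D_i spins, total n = ∑_i D_i spins, and for each register i an injective assignment c ↦ s^{(i,c)} ∈ {−1,+1}^{D_i} of choices c ∈ {1,…,m_i} (m_i ≤ 2^{D_i}) to sign vectors. Let x_{i,c}(z_i) = 2^{−D_i} ∏_q (1 + s^{(i,c)}_q z_{i,q}), let α_i : {1,…,m_i} → ℝ and β_{i,j} : {1,…,m_i}×{1,…,m_j} → ℝ with ∑_{c_j} β_{i,j}(c_i,c_j) = 0 for all c_i and ∑_{c_i} β_{i,j}(c_i,c_j) = 0 for all c_j, and define f(z) = ∑_i ∑_{c} α_i(c) x_{i,c}(z_i) + ∑_{i<j} ∑_{c_i,c_j} β_{i,j}(c_i,c_j) x_{i,c_i}(z_i) x_{j,c_j}(z_j). Then for every nonempty S ⊆ [n]: (1) if S ⊆ register i, the Walsh coefficient of f at S equals 2^{−D_i} ∑_c α_i(c) ∏_{q∈S} s^{(i,c)}_q; (2) if S = T_i ⊔ T_j with T_i, T_j nonempty subsets of registers i and j respectively, it equals 2^{−(D_i+D_j)} ∑_{c_i,c_j} β_{i,j}(c_i,c_j) (∏_{q∈T_i}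 s^{(i,c_i)}_q)(∏_{q∈T_j} s^{(j,c_j)}_q); (3) if S intersects three or more registers, it equals 0. -/

import Mathlib

open Finset

/-- The Ising point of the hypercube `{−1,+1}^ι` corresponding to a bit vector. -/
noncomputable def toSign {ι : Type*} (b : ι → Bool) : ι → ℝ :=
  fun q => if b q then 1 else -1

/-- The Walsh coefficient `f̂(T) = E_z[f(z) χ_T(z)]` under the uniform measure on the
hypercube `{−1,+1}^ι`. -/
noncomputable def walshCoeff {ι : Type*} [Fintype ι] [DecidableEq ι]
    (f : (ι → ℝ) → ℝ) (T : Finset ι) : ℝ :=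
  ((2 : ℝ) ^ Fintype.card ι)⁻¹ * ∑ b : ι → Bool, f (toSign b) * ∏ q ∈ T, toSign b q

/-- The indicator polynomial `x_{i,c}(z_i) = 2^{−D_i} ∏_q (1 + s^{(i,c)}_q z_{i,q})` of
choice `c` of register `i`. -/
noncomputable def indicatorPoly {N : ℕ} (D m : Fin N → ℕ)
    (s : ∀ i, Fin (m i) → Fin (D i) → ℝ) (i : Fin N) (c : Fin (m i))
    (z : ((i : Fin N) × Fin (D i)) → ℝ) : ℝ :=
  ((2 : ℝ) ^ D i)⁻¹ * ∏ q : Fin (D i), (1 + s i c q * z ⟨i, q⟩)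

/-- The exact-binary encoded pairwise cost function
`f(z) = ∑_i ∑_c α_i(c) x_{i,c}(z_i) + ∑_{i<j} ∑_{c_i,c_j} β_{i,j}(c_i,c_j) x_{i,c_i}(z_i) x_{j,c_j}(z_j)`. -/
noncomputable def encodedF {N : ℕ} (D m : Fin N → ℕ)
    (s : ∀ i, Fin (m i) → Fin (D i) → ℝ)
    (α : ∀ i, Fin (m i) → ℝ) (β : ∀ i j, Fin (m i) → Fin (m j) → ℝ)
    (z : ((i : Fin N) × Fin (D i)) → ℝ) : ℝ :=
  (∑ i : Fin N, ∑ c : Fin (m i), α i c * indicatorPoly D m s i c z) +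
    ∑ i : Fin N, ∑ j : Fin N,
      if i < j then
        ∑ ci : Fin (m i), ∑ cj : Fin (m j),
          β i j ci cj * indicatorPoly D m s i ci z * indicatorPoly D m s j cj z
      else 0

section Aux

lemma toSign_eq {ι : Type*} (b : ι → Bool) (q : ι) :
    toSign b q = (fun v : Bool => if v then (1:ℝ) else -1) (b q) := rfl

lemma sum_toSign_prod {ι : Type*} [Fintype ι] [DecidableEq ι] (A B : Finset ι) :
    ∑ b : ι → Bool, (∏ q ∈ A, toSign b q) * ∏ q ∈ B, toSign b q
      = if A = B then (2:ℝ) ^ Fintype.card ι else 0 := by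
  have key : ∀ b : ι → Bool, (∏ q ∈ A, toSign b q) * ∏ q ∈ B, toSign b q
      = ∏ q : ι, ((if q ∈ A then toSign b q else 1) * (if q ∈ B then toSign b q else 1)) := by
    intro b
    rw [Finset.prod_mul_distrib, Finset.prod_ite_mem, Finset.prod_ite_mem,
      Finset.univ_inter, Finset.univ_inter]
  simp_rw [key, toSign_eq]
  rw [← Fintype.prod_sum
    (f := fun q (v : Bool) => ((if q ∈ A then (if v then (1:ℝ) else -1) else 1) *
      (if q ∈ B then (if v then (1:ℝ) else -1) else 1)))]
  have hfac : ∀ q : ι, (∑ v : Bool, ((if q ∈ A then (if v then (1:ℝ) else -1) else 1) *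
      (if q ∈ B then (if v then (1:ℝ) else -1) else 1)))
      = if (q ∈ A ↔ q ∈ B) then 2 else 0 := by
    intro q
    by_cases hA : q ∈ A <;> by_cases hB : q ∈ B <;> simp [hA, hB, Fintype.sum_bool] <;> norm_num
  rw [Finset.prod_congr rfl fun q _ => hfac q]
  by_cases h : A = B
  · subst h
    simp [Finset.prod_const, Finset.card_univ]
  · rw [if_neg h]
    obtain ⟨q, hq⟩ : ∃ q, ¬ (q ∈ A ↔ q ∈ B) := by
      by_contra hc
      push_neg at hc
      exact h (Finset.ext fun q => hc q)
    exact Finset.prod_eq_zero (Finset.mem_univ q) (by simp [hq])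

variable {N : ℕ} {D : Fin N → ℕ}

/-- The part of `S` lying in register `i`. -/
noncomputable def regPart (i : Fin N) (S : Finset ((i : Fin N) × Fin (D i))) :
    Finset (Fin (D i)) :=
  S.preimage (fun q => (⟨i, q⟩ : (i : Fin N) × Fin (D i)))
    (fun _ _ _ _ h => eq_of_heq (Sigma.mk.inj_iff.mp h).2)

lemma mem_regPart {i : Fin N} {S : Finset ((i : Fin N) × Fin (D i))} {q : Fin (D i)} :
    q ∈ regPart i S ↔ (⟨i, q⟩ : (i : Fin N) × Fin (D i)) ∈ S := by
  unfold regPart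
  exact Finset.mem_preimage

lemma mem_image_mk {i : Fin N} {U : Finset (Fin (D i))} {q : Fin (D i)} :
    (⟨i, q⟩ : (i : Fin N) × Fin (D i)) ∈ U.image (Sigma.mk i) ↔ q ∈ U := by
  simp [Finset.mem_image]

lemma not_mem_image_mk {i a : Fin N} (h : a ≠ i) {U : Finset (Fin (D i))} {q : Fin (D a)} :
    (⟨a, q⟩ : (i : Fin N) × Fin (D i)) ∉ U.image (Sigma.mk i) := by
  intro hmem
  obtain ⟨u, _, he⟩ := Finset.mem_image.mp hmem
  exact h (congrArg Sigma.fst he).symm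

lemma image_mk_eq_iff {i : Fin N} (U : Finset (Fin (D i)))
    (S : Finset ((i : Fin N) × Fin (D i))) :
    U.image (Sigma.mk i) = S ↔ ((∀ p ∈ S, p.1 = i) ∧ U = regPart i S) := by
  constructor
  · rintro rfl
    refine ⟨?_, ?_⟩
    · rintro p hp
      obtain ⟨u, _, rfl⟩ := Finset.mem_image.mp hp
      rfl
    · ext q
      rw [mem_regPart, mem_image_mk]
  · rintro ⟨hall, rfl⟩
    ext ⟨a, q⟩
    by_cases ha : a = i
    · subst ha
      rw [mem_image_mk, mem_regPart]
    · simp only [not_mem_image_mk ha, false_iff]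
      intro hmem
      exact ha (hall _ hmem)

lemma union_image_mk_eq_iff {i j : Fin N} (hij : i ≠ j) (U : Finset (Fin (D i)))
    (V : Finset (Fin (D j))) (S : Finset ((i : Fin N) × Fin (D i))) :
    U.image (Sigma.mk i) ∪ V.image (Sigma.mk j) = S ↔
      ((∀ p ∈ S, p.1 = i ∨ p.1 = j) ∧ U = regPart i S ∧ V = regPart j S) := by
  constructor
  · rintro rfl
    refine ⟨?_, ?_, ?_⟩
    · rintro p hp
      rcases Finset.mem_union.mp hp with h | h
      · obtain ⟨u, _, rfl⟩ := Finset.mem_image.mp h; exact Or.inl rfl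
      · obtain ⟨u, _, rfl⟩ := Finset.mem_image.mp h; exact Or.inr rfl
    · ext q
      rw [mem_regPart, Finset.mem_union, mem_image_mk]
      simp [not_mem_image_mk hij]
    · ext q
      rw [mem_regPart, Finset.mem_union, mem_image_mk]
      simp [not_mem_image_mk hij.symm]
  · rintro ⟨hall, rfl, rfl⟩
    ext ⟨a, q⟩
    rw [Finset.mem_union]
    by_cases ha : a = i
    · subst ha
      rw [mem_image_mk, mem_regPart]
      simp only [not_mem_image_mk hij, or_false]
    · by_cases ha' : a = j
      · subst ha'
        rw [mem_image_mk, mem_regPart]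
        simp only [not_mem_image_mk ha, false_or]
      · simp only [not_mem_image_mk ha, not_mem_image_mk ha', or_self, false_iff]
        intro hmem
        rcases hall _ hmem with h | h
        · exact ha h
        · exact ha' h

lemma disjoint_image_mk {i j : Fin N} (hij : i ≠ j) (U : Finset (Fin (D i)))
    (V : Finset (Fin (D j))) :
    Disjoint (U.image (fun q => (⟨i, q⟩ : (i : Fin N) × Fin (D i))))
      (V.image (fun q => (⟨j, q⟩ : (i : Fin N) × Fin (D i)))) := by
  refine Finset.disjoint_left.mpr ?_
  rintro ⟨a, q⟩ h1 h2
  obtain ⟨u, _, he⟩ := Finset.mem_image.mp h1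
  obtain ⟨v, _, he'⟩ := Finset.mem_image.mp h2
  exact hij ((congrArg Sigma.fst he).trans (congrArg Sigma.fst he').symm)

/-- expansion of the indicator polynomial over subsets. -/
lemma indicator_expand (D m : Fin N → ℕ)
    (s : ∀ i, Fin (m i) → Fin (D i) → ℝ) (i : Fin N) (c : Fin (m i))
    (z : ((i : Fin N) × Fin (D i)) → ℝ) :
    indicatorPoly D m s i c z = ((2 : ℝ) ^ D i)⁻¹ *
      ∑ U : Finset (Fin (D i)), (∏ q ∈ U, s i c q) *
        ∏ p ∈ U.image (fun q => (⟨i, q⟩ : (i : Fin N) × Fin (D i))), z p := by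
  rw [indicatorPoly]
  congr 1
  have h1 : ∀ q : Fin (D i), (1 : ℝ) + s i c q * z ⟨i, q⟩
      = s i c q * z ⟨i, q⟩ + 1 := fun q => add_comm _ _
  rw [Finset.prod_congr rfl fun q _ => h1 q, Fintype.prod_add]
  refine Finset.sum_congr rfl fun U _ => ?_
  rw [Finset.prod_const_one, mul_one, Finset.prod_mul_distrib,
    Finset.prod_image (fun x _ y _ h => eq_of_heq (Sigma.mk.inj_iff.mp h).2)]

variable (m : Fin N → ℕ) (s : ∀ i, Fin (m i) → Fin (D i) → ℝ)

lemma wc_indicator (i : Fin N) (c : Fin (m i)) (S : Finset ((i : Fin N) × Fin (D i))) :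
    walshCoeff (indicatorPoly D m s i c) S =
      if ∀ p ∈ S, p.1 = i then
        ((2 : ℝ) ^ D i)⁻¹ * ∏ q ∈ regPart i S, s i c q
      else 0 := by
  rw [walshCoeff]
  have hexp : ∀ b : ((i : Fin N) × Fin (D i)) → Bool,
      indicatorPoly D m s i c (toSign b) * ∏ p ∈ S, toSign b p
      = ((2 : ℝ) ^ D i)⁻¹ * ∑ U : Finset (Fin (D i)), (∏ q ∈ U, s i c q) *
          ((∏ p ∈ U.image (fun q => (⟨i, q⟩ : (i : Fin N) × Fin (D i))), toSign b p) *
            ∏ p ∈ S, toSign b p) := by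
    intro b
    rw [indicator_expand, mul_assoc, Finset.sum_mul]
    congr 1
    exact Finset.sum_congr rfl fun U _ => by ring
  rw [Finset.sum_congr rfl fun b _ => hexp b, ← Finset.mul_sum, Finset.sum_comm]
  have hb : ∀ U : Finset (Fin (D i)),
      (∑ b : ((i : Fin N) × Fin (D i)) → Bool, (∏ q ∈ U, s i c q) *
        ((∏ p ∈ U.image (fun q => (⟨i, q⟩ : (i : Fin N) × Fin (D i))), toSign b p) *
          ∏ p ∈ S, toSign b p))
      = (∏ q ∈ U, s i c q) *
          if ((∀ p ∈ S, p.1 = i) ∧ U = regPart i S) then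
            (2 : ℝ) ^ Fintype.card ((i : Fin N) × Fin (D i)) else 0 := by
    intro U
    rw [← Finset.mul_sum, sum_toSign_prod]
    congr 1
    exact if_congr (image_mk_eq_iff U S) rfl rfl
  rw [Finset.sum_congr rfl fun U _ => hb U]
  have h2n : ((2 : ℝ) ^ Fintype.card ((i : Fin N) × Fin (D i))) ≠ 0 :=
    pow_ne_zero _ two_ne_zero
  by_cases hc : ∀ p ∈ S, p.1 = i
  · simp only [eq_true hc, true_and, mul_ite, mul_zero, if_true]
    rw [Finset.sum_ite_eq' Finset.univ (regPart i S)
      (fun U => (∏ q ∈ U, s i c q) * (2 : ℝ) ^ Fintype.card ((i : Fin N) × Fin (D i)))]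
    simp only [Finset.mem_univ, if_pos]
    field_simp
  · simp [hc]

lemma wc_pair {i j : Fin N} (hij : i ≠ j) (ci : Fin (m i)) (cj : Fin (m j))
    (S : Finset ((i : Fin N) × Fin (D i))) :
    walshCoeff (fun z => indicatorPoly D m s i ci z * indicatorPoly D m s j cj z) S =
      if ∀ p ∈ S, p.1 = i ∨ p.1 = j then
        ((2 : ℝ) ^ D i)⁻¹ * ((2 : ℝ) ^ D j)⁻¹ *
          ((∏ q ∈ regPart i S, s i ci q) * ∏ q ∈ regPart j S, s j cj q)
      else 0 := by
  rw [walshCoeff]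
  have hexp : ∀ b : ((i : Fin N) × Fin (D i)) → Bool,
      (indicatorPoly D m s i ci (toSign b) * indicatorPoly D m s j cj (toSign b)) *
        ∏ p ∈ S, toSign b p
      = ((2 : ℝ) ^ D i)⁻¹ * ((2 : ℝ) ^ D j)⁻¹ *
          ∑ U : Finset (Fin (D i)), ∑ V : Finset (Fin (D j)),
            ((∏ q ∈ U, s i ci q) * ∏ q ∈ V, s j cj q) *
            ((∏ p ∈ U.image (fun q => (⟨i, q⟩ : (i : Fin N) × Fin (D i))) ∪
                V.image (fun q => (⟨j, q⟩ : (i : Fin N) × Fin (D i))), toSign b p) *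
              ∏ p ∈ S, toSign b p) := by
    intro b
    rw [indicator_expand, indicator_expand]
    rw [show (((2 : ℝ) ^ D i)⁻¹ * ∑ U : Finset (Fin (D i)), (∏ q ∈ U, s i ci q) *
          ∏ p ∈ U.image (fun q => (⟨i, q⟩ : (i : Fin N) × Fin (D i))), toSign b p) *
        (((2 : ℝ) ^ D j)⁻¹ * ∑ V : Finset (Fin (D j)), (∏ q ∈ V, s j cj q) *
          ∏ p ∈ V.image (fun q => (⟨j, q⟩ : (i : Fin N) × Fin (D i))), toSign b p) *
        ∏ p ∈ S, toSign b p
      = ((2 : ℝ) ^ D i)⁻¹ * ((2 : ℝ) ^ D j)⁻¹ *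
        ((∑ U : Finset (Fin (D i)), (∏ q ∈ U, s i ci q) *
          ∏ p ∈ U.image (fun q => (⟨i, q⟩ : (i : Fin N) × Fin (D i))), toSign b p) *
        (∑ V : Finset (Fin (D j)), (∏ q ∈ V, s j cj q) *
          ∏ p ∈ V.image (fun q => (⟨j, q⟩ : (i : Fin N) × Fin (D i))), toSign b p) *
        ∏ p ∈ S, toSign b p) from by ring]
    congr 1
    rw [Finset.sum_mul_sum]
    rw [Finset.sum_mul]
    refine Finset.sum_congr rfl fun U _ => ?_
    rw [Finset.sum_mul]
    refine Finset.sum_congr rfl fun V _ => ?_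
    rw [Finset.prod_union (disjoint_image_mk hij U V)]
    ring
  rw [Finset.sum_congr rfl fun b _ => hexp b, ← Finset.mul_sum, Finset.sum_comm]
  have hb : ∀ U : Finset (Fin (D i)),
      (∑ b : ((i : Fin N) × Fin (D i)) → Bool, ∑ V : Finset (Fin (D j)),
        ((∏ q ∈ U, s i ci q) * ∏ q ∈ V, s j cj q) *
        ((∏ p ∈ U.image (fun q => (⟨i, q⟩ : (i : Fin N) × Fin (D i))) ∪
            V.image (fun q => (⟨j, q⟩ : (i : Fin N) × Fin (D i))), toSign b p) *
          ∏ p ∈ S, toSign b p))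
      = ∑ V : Finset (Fin (D j)),
          ((∏ q ∈ U, s i ci q) * ∏ q ∈ V, s j cj q) *
          if ((∀ p ∈ S, p.1 = i ∨ p.1 = j) ∧ U = regPart i S ∧ V = regPart j S) then
            (2 : ℝ) ^ Fintype.card ((i : Fin N) × Fin (D i)) else 0 := by
    intro U
    rw [Finset.sum_comm]
    refine Finset.sum_congr rfl fun V _ => ?_
    rw [← Finset.mul_sum, sum_toSign_prod]
    congr 1
    exact if_congr (union_image_mk_eq_iff hij U V S) rfl rfl
  rw [Finset.sum_congr rfl fun U _ => hb U]
  have h2n : ((2 : ℝ) ^ Fintype.card ((i : Fin N) × Fin (D i))) ≠ 0 :=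
    pow_ne_zero _ two_ne_zero
  by_cases hc : ∀ p ∈ S, p.1 = i ∨ p.1 = j
  · simp only [eq_true hc, true_and, mul_ite, mul_zero, if_true]
    have inner : ∀ U : Finset (Fin (D i)),
        (∑ V : Finset (Fin (D j)),
          if U = regPart i S ∧ V = regPart j S then
            ((∏ q ∈ U, s i ci q) * ∏ q ∈ V, s j cj q) *
              (2 : ℝ) ^ Fintype.card ((i : Fin N) × Fin (D i)) else 0)
        = if U = regPart i S then
            ((∏ q ∈ U, s i ci q) * ∏ q ∈ regPart j S, s j cj q) *
              (2 : ℝ) ^ Fintype.card ((i : Fin N) × Fin (D i)) else 0 := by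
      intro U
      by_cases hU : U = regPart i S
      · simp only [hU, true_and, if_pos]
        rw [Finset.sum_ite_eq' Finset.univ (regPart j S)]
        simp
      · simp [hU]
    rw [Finset.sum_congr rfl fun U _ => inner U,
      Finset.sum_ite_eq' Finset.univ (regPart i S)]
    simp only [Finset.mem_univ, if_pos]
    field_simp
  · simp [hc]

end Aux

section Lin

variable {ι : Type*} [Fintype ι] [DecidableEq ι]

lemma walshCoeff_add (f g : (ι → ℝ) → ℝ) (S : Finset ι) :
    walshCoeff (fun z => f z + g z) S = walshCoeff f S + walshCoeff g S := by
  simp [walshCoeff, add_mul, Finset.sum_add_distrib, mul_add]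

lemma walshCoeff_sum {κ : Type*} (t : Finset κ) (f : κ → (ι → ℝ) → ℝ) (S : Finset ι) :
    walshCoeff (fun z => ∑ k ∈ t, f k z) S = ∑ k ∈ t, walshCoeff (f k) S := by
  simp only [walshCoeff, Finset.sum_mul]
  rw [Finset.sum_comm, Finset.mul_sum]

lemma walshCoeff_const_mul (a : ℝ) (f : (ι → ℝ) → ℝ) (S : Finset ι) :
    walshCoeff (fun z => a * f z) S = a * walshCoeff f S := by
  simp only [walshCoeff, mul_assoc, ← Finset.mul_sum]
  ring

lemma walshCoeff_ite (P : Prop) [Decidable P] (f : (ι → ℝ) → ℝ) (S : Finset ι) :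
    walshCoeff (fun z => if P then f z else 0) S = if P then walshCoeff f S else 0 := by
  split_ifs <;> simp [walshCoeff]

end Lin

lemma wc_encodedF {N : ℕ} (D m : Fin N → ℕ)
    (s : ∀ i, Fin (m i) → Fin (D i) → ℝ)
    (α : ∀ i, Fin (m i) → ℝ) (β : ∀ i j, Fin (m i) → Fin (m j) → ℝ)
    (S : Finset ((i : Fin N) × Fin (D i))) :
    walshCoeff (encodedF D m s α β) S =
      (∑ i : Fin N, ∑ c : Fin (m i), α i c *
        (if ∀ p ∈ S, p.1 = i then ((2 : ℝ) ^ D i)⁻¹ * ∏ q ∈ regPart i S, s i c q else 0)) +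
      ∑ i : Fin N, ∑ j : Fin N,
        if i < j then
          ∑ ci : Fin (m i), ∑ cj : Fin (m j), β i j ci cj *
            (if ∀ p ∈ S, p.1 = i ∨ p.1 = j then
              ((2 : ℝ) ^ D i)⁻¹ * ((2 : ℝ) ^ D j)⁻¹ *
                ((∏ q ∈ regPart i S, s i ci q) * ∏ q ∈ regPart j S, s j cj q)
            else 0)
        else 0 := by
  rw [show encodedF D m s α β = fun z =>
      (∑ i : Fin N, ∑ c : Fin (m i), α i c * indicatorPoly D m s i c z) +
      (∑ i : Fin N, ∑ j : Fin N,
        if i < j then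
          ∑ ci : Fin (m i), ∑ cj : Fin (m j),
            β i j ci cj * indicatorPoly D m s i ci z * indicatorPoly D m s j cj z
        else 0) from rfl,
    walshCoeff_add]
  congr 1
  · rw [walshCoeff_sum]
    refine Finset.sum_congr rfl fun i _ => ?_
    rw [walshCoeff_sum]
    refine Finset.sum_congr rfl fun c _ => ?_
    rw [walshCoeff_const_mul, wc_indicator]
  · rw [walshCoeff_sum]
    refine Finset.sum_congr rfl fun i _ => ?_
    rw [walshCoeff_sum]
    refine Finset.sum_congr rfl fun j _ => ?_
    rw [walshCoeff_ite]
    by_cases hij : i < j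
    · rw [if_pos hij, if_pos hij, walshCoeff_sum]
      refine Finset.sum_congr rfl fun ci _ => ?_
      rw [walshCoeff_sum]
      refine Finset.sum_congr rfl fun cj _ => ?_
      rw [show (fun z => β i j ci cj * indicatorPoly D m s i ci z * indicatorPoly D m s j cj z)
          = fun z => β i j ci cj * (indicatorPoly D m s i ci z * indicatorPoly D m s j cj z)
          from funext fun z => by ring,
        walshCoeff_const_mul, wc_pair m s (ne_of_lt hij)]
    · rw [if_neg hij, if_neg hij]

/-- Cost-table form of the encoded couplings: under the centered normalization of the
pairwise tables, for every nonempty `S`: (1) if `S` lies in register `i`, the Walsh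
coefficient of `f` at `S` is `2^{−D_i} ∑_c α_i(c) ∏_{q∈S} s^{(i,c)}_q`; (2) if
`S = T_i ⊔ T_j` with `T_i, T_j` nonempty subsets of registers `i < j`, it is
`2^{−(D_i+D_j)} ∑_{c_i,c_j} β_{i,j}(c_i,c_j) (∏_{q∈T_i} s^{(i,c_i)}_q)(∏_{q∈T_j} s^{(j,c_j)}_q)`;
(3) if `S` intersects three or more registers, it is `0`. -/
theorem stmt16 {N : ℕ} (D m : Fin N → ℕ) (hm : ∀ i, m i ≤ 2 ^ D i)
    (s : ∀ i, Fin (m i) → Fin (D i) → ℝ)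
    (hs : ∀ i c q, s i c q = 1 ∨ s i c q = -1)
    (hinj : ∀ i, Function.Injective (s i))
    (α : ∀ i, Fin (m i) → ℝ) (β : ∀ i j, Fin (m i) → Fin (m j) → ℝ)
    (hrow : ∀ i j, i < j → ∀ ci : Fin (m i), ∑ cj : Fin (m j), β i j ci cj = 0)
    (hcol : ∀ i j, i < j → ∀ cj : Fin (m j), ∑ ci : Fin (m i), β i j ci cj = 0) :
    (∀ (i : Fin N) (T : Finset (Fin (D i))), T.Nonempty →
      walshCoeff (encodedF D m s α β)
          (T.image (fun q => (⟨i, q⟩ : (i : Fin N) × Fin (D i)))) =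
        ((2 : ℝ) ^ D i)⁻¹ * ∑ c : Fin (m i), α i c * ∏ q ∈ T, s i c q) ∧
    (∀ i j, i < j → ∀ (Ti : Finset (Fin (D i))) (Tj : Finset (Fin (D j))),
      Ti.Nonempty → Tj.Nonempty →
      walshCoeff (encodedF D m s α β)
          (Ti.image (fun q => (⟨i, q⟩ : (i : Fin N) × Fin (D i))) ∪
            Tj.image (fun q => (⟨j, q⟩ : (i : Fin N) × Fin (D i)))) =
        ((2 : ℝ) ^ (D i + D j))⁻¹ *
          ∑ ci : Fin (m i), ∑ cj : Fin (m j),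
            β i j ci cj * (∏ q ∈ Ti, s i ci q) * ∏ q ∈ Tj, s j cj q) ∧
    (∀ S : Finset ((i : Fin N) × Fin (D i)), 3 ≤ (S.image Sigma.fst).card →
      walshCoeff (encodedF D m s α β) S = 0) := by
  refine ⟨?_, ?_, ?_⟩
  · -- Part 1
    intro i T hT
    obtain ⟨q0, hq0⟩ := hT
    rw [wc_encodedF]
    generalize hSdef : T.image (fun q => (⟨i, q⟩ : (i : Fin N) × Fin (D i))) = S
    have hallS : ∀ p ∈ S, p.1 = i := by
      rw [← hSdef]
      intro p hp
      obtain ⟨q, _, rfl⟩ := Finset.mem_image.mp hp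
      rfl
    have hiq0 : (⟨i, q0⟩ : (i : Fin N) × Fin (D i)) ∈ S := by
      rw [← hSdef]; exact Finset.mem_image_of_mem _ hq0
    have hreg : regPart i S = T := (((image_mk_eq_iff T S).mp hSdef).2).symm
    have hB : ∀ a b : Fin N, (if a < b then
          ∑ ci : Fin (m a), ∑ cj : Fin (m b), β a b ci cj *
            (if ∀ p ∈ S, p.1 = a ∨ p.1 = b then
              ((2 : ℝ) ^ D a)⁻¹ * ((2 : ℝ) ^ D b)⁻¹ *
                ((∏ q ∈ regPart a S, s a ci q) * ∏ q ∈ regPart b S, s b cj q)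
            else 0)
        else 0) = 0 := by
      intro a b
      by_cases hab : a < b
      · rw [if_pos hab]
        by_cases hia : i = a
        · subst hia
          have hbne : b ≠ i := fun h => absurd (h ▸ hab) (lt_irrefl _)
          have hregb : regPart b S = ∅ :=
            Finset.eq_empty_of_forall_notMem fun q hq => hbne (hallS _ (mem_regPart.mp hq))
          have hcnd : ∀ p ∈ S, p.1 = i ∨ p.1 = b := fun p hp => Or.inl (hallS p hp)
          simp only [eq_true hcnd, if_true]
          refine Finset.sum_eq_zero fun ci _ => ?_
          rw [hregb]
          simp only [Finset.prod_empty, mul_one]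
          rw [← Finset.sum_mul, hrow i b hab ci, zero_mul]
        · by_cases hib : i = b
          · subst hib
            have hane : a ≠ i := fun h => absurd (h ▸ hab) (lt_irrefl _)
            have hrega : regPart a S = ∅ :=
              Finset.eq_empty_of_forall_notMem fun q hq => hane (hallS _ (mem_regPart.mp hq))
            have hcnd : ∀ p ∈ S, p.1 = a ∨ p.1 = i := fun p hp => Or.inr (hallS p hp)
            simp only [eq_true hcnd, if_true]
            rw [Finset.sum_comm]
            refine Finset.sum_eq_zero fun cj _ => ?_
            rw [hrega]
            simp only [Finset.prod_empty, one_mul]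
            rw [← Finset.sum_mul, hcol a i hab cj, zero_mul]
          · have hcond : ¬ (∀ p ∈ S, p.1 = a ∨ p.1 = b) := by
              intro h
              rcases h _ hiq0 with h' | h'
              · exact hia h'
              · exact hib h'
            simp [hcond]
      · rw [if_neg hab]
    have hB0 : (∑ a : Fin N, ∑ b : Fin N, if a < b then
          ∑ ci : Fin (m a), ∑ cj : Fin (m b), β a b ci cj *
            (if ∀ p ∈ S, p.1 = a ∨ p.1 = b then
              ((2 : ℝ) ^ D a)⁻¹ * ((2 : ℝ) ^ D b)⁻¹ *
                ((∏ q ∈ regPart a S, s a ci q) * ∏ q ∈ regPart b S, s b cj q)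
            else 0)
        else 0) = 0 :=
      Finset.sum_eq_zero fun a _ => Finset.sum_eq_zero fun b _ => hB a b
    rw [hB0, add_zero]
    rw [Finset.sum_eq_single i]
    · simp only [eq_true hallS, if_true, hreg]
      rw [Finset.mul_sum]
      exact Finset.sum_congr rfl fun c _ => by ring
    · intro a _ hai
      have hcond : ¬ (∀ p ∈ S, p.1 = a) := fun h => hai ((h _ hiq0).symm)
      simp [hcond]
    · exact fun h => absurd (Finset.mem_univ i) h
  · -- Part 2
    intro i j hij Ti Tj hTi hTj
    obtain ⟨qi, hqi⟩ := hTi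
    obtain ⟨qj, hqj⟩ := hTj
    have hne : i ≠ j := ne_of_lt hij
    rw [wc_encodedF]
    generalize hSdef : (Ti.image (fun q => (⟨i, q⟩ : (i : Fin N) × Fin (D i))) ∪
      Tj.image (fun q => (⟨j, q⟩ : (i : Fin N) × Fin (D i)))) = S
    obtain ⟨hall2, hTi', hTj'⟩ := (union_image_mk_eq_iff hne Ti Tj S).mp hSdef
    have hregi : regPart i S = Ti := hTi'.symm
    have hregj : regPart j S = Tj := hTj'.symm
    have hi_mem : (⟨i, qi⟩ : (i : Fin N) × Fin (D i)) ∈ S := by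
      rw [← hSdef]; exact Finset.mem_union_left _ (Finset.mem_image_of_mem _ hqi)
    have hj_mem : (⟨j, qj⟩ : (i : Fin N) × Fin (D i)) ∈ S := by
      rw [← hSdef]; exact Finset.mem_union_right _ (Finset.mem_image_of_mem _ hqj)
    have hA0 : (∑ a : Fin N, ∑ c : Fin (m a), α a c *
        (if ∀ p ∈ S, p.1 = a then ((2 : ℝ) ^ D a)⁻¹ * ∏ q ∈ regPart a S, s a c q else 0)) = 0 := by
      refine Finset.sum_eq_zero fun a _ => ?_
      have hcond : ¬ (∀ p ∈ S, p.1 = a) := by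
        intro h
        exact hne ((h _ hi_mem).trans (h _ hj_mem).symm)
      simp [hcond]
    rw [hA0, zero_add]
    rw [Finset.sum_eq_single i]
    · rw [Finset.sum_eq_single j]
      · rw [if_pos hij]
        simp only [eq_true hall2, if_true]
        rw [hregi, hregj, pow_add, mul_inv, Finset.mul_sum]
        refine Finset.sum_congr rfl fun ci _ => ?_
        rw [Finset.mul_sum]
        exact Finset.sum_congr rfl fun cj _ => by ring
      · intro b _ hbj
        by_cases hib : i < b
        · have hcond : ¬ (∀ p ∈ S, p.1 = i ∨ p.1 = b) := by
            intro h
            rcases h _ hj_mem with h' | h'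
            · exact hne h'.symm
            · exact hbj h'.symm
          simp [hib, hcond]
        · simp [hib]
      · exact fun h => absurd (Finset.mem_univ j) h
    · intro a _ hai
      refine Finset.sum_eq_zero fun b _ => ?_
      by_cases hab : a < b
      · have hcond : ¬ (∀ p ∈ S, p.1 = a ∨ p.1 = b) := by
          intro h
          rcases h _ hi_mem with h' | h'
          · exact hai h'.symm
          · -- i = b
            rcases h _ hj_mem with h'' | h''
            · -- j = a : then a < b means j < i
              rw [← h'', ← h'] at hab
              exact absurd hab (lt_asymm hij)
            · -- j = b = i
              exact hne (h'.trans h''.symm)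
        simp [hab, hcond]
      · simp [hab]
    · exact fun h => absurd (Finset.mem_univ i) h
  · -- Part 3
    intro S h3
    rw [wc_encodedF]
    have hno1 : ∀ a : Fin N, ¬ (∀ p ∈ S, p.1 = a) := by
      intro a h
      have hsub : S.image Sigma.fst ⊆ {a} := by
        intro x hx
        obtain ⟨p, hp, rfl⟩ := Finset.mem_image.mp hx
        simp [h p hp]
      have := Finset.card_le_card hsub
      simp only [Finset.card_singleton] at this
      omega
    have hno2 : ∀ a b : Fin N, ¬ (∀ p ∈ S, p.1 = a ∨ p.1 = b) := by
      intro a b h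
      have hsub : S.image Sigma.fst ⊆ {a, b} := by
        intro x hx
        obtain ⟨p, hp, rfl⟩ := Finset.mem_image.mp hx
        rcases h p hp with h' | h' <;> simp [h']
      have h1 := Finset.card_le_card hsub
      have h2 : ({a, b} : Finset (Fin N)).card ≤ 2 :=
        (Finset.card_insert_le _ _).trans (by simp)
      omega
    rw [show (∑ a : Fin N, ∑ c : Fin (m a), α a c *
        (if ∀ p ∈ S, p.1 = a then ((2 : ℝ) ^ D a)⁻¹ * ∏ q ∈ regPart a S, s a c q else 0)) = 0
      from Finset.sum_eq_zero fun a _ => by simp [hno1 a], zero_add]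
    refine Finset.sum_eq_zero fun a _ => Finset.sum_eq_zero fun b _ => ?_
    by_cases hab : a < b
    · simp [hab, hno2 a b]
    · simp [hab]
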